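/- For every α with 0 < α < 1, there exists a decision instance for which no decision sequence satisfies α-ℓ-Agreement PJR. -/

import Mathlib

attribute [local instance] Classical.propDecidable

/-- A decision instance with `n ≥ 1` voters (indexed by `Fin n`), time horizon `T ≥ 1`
(rounds indexed by `Fin T`), alternatives drawn from a type `γ`, a finite nonempty set
`C j` of alternatives available in round `j`, and approval sets `A i j ⊆ C j`. -/
structure Inst (n T : ℕ) (γ : Type) where
  hn : 1 ≤ n
  hT : 1 ≤ T
  C : Fin T → Finset γ
  hC : ∀ j, (C j).Nonempty
  A : Fin n → Fin T → Finset γ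
  hA : ∀ i j, A i j ⊆ C j

namespace Inst

variable {n T : ℕ} {γ : Type}

/-- `d` is a decision sequence: one alternative of `C j` for each round `j`. -/
def ValidSeq (I : Inst n T γ) (d : Fin T → γ) : Prop := ∀ j, d j ∈ I.C j

/-- The utility of voter `i`: the number of rounds whose decision `i` approves. -/
noncomputable def util (I : Inst n T γ) (d : Fin T → γ) (i : Fin n) : ℕ :=
  Nat.card {j : Fin T // d j ∈ I.A i j}

/-- The group `S` agrees in round `j`: some alternative is approved by all members of `S`. -/
def agrees (I : Inst n T γ) (S : Finset (Fin n)) (j : Fin T) : Prop :=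
  ∃ c, ∀ i ∈ S, c ∈ I.A i j

/-- The number of rounds in which the group `S` agrees. -/
noncomputable def agreeCount (I : Inst n T γ) (S : Finset (Fin n)) : ℕ :=
  Nat.card {j : Fin T // I.agrees S j}

/-- The number of rounds whose decision is approved by at least one member of `S`. -/
noncomputable def happyCount (I : Inst n T γ) (d : Fin T → γ) (S : Finset (Fin n)) : ℕ :=
  Nat.card {j : Fin T // ∃ i ∈ S, d j ∈ I.A i j}

/-- For `0 < a < 1`, `D` satisfies `a`-ℓ-Agreement PJR: for every `ℓ ≥ 1` and every
nonempty group `S` that agrees in at least `ℓ` rounds with `|S| ≥ ℓ·n/T`, there are at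
least `⌊a·ℓ⌋` rounds whose decision is approved by some member of `S`. -/
def alphaEllAgreementPJR (I : Inst n T γ) (a : ℝ) (d : Fin T → γ) : Prop :=
  ∀ ℓ : ℕ, 1 ≤ ℓ →
    ∀ S : Finset (Fin n), S.Nonempty → ℓ ≤ I.agreeCount S →
      (ℓ : ℝ) * n / T ≤ S.card → ⌊a * ℓ⌋₊ ≤ I.happyCount d S

end Inst

/-- for every `0 < α < 1` there is a decision instance on which no decision
sequence satisfies `α`-ℓ-Agreement PJR. -/
theorem alpha_ell_agreement_PJR_infeasible (a : ℝ) (ha₀ : 0 < a) (ha₁ : a < 1) :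
    ∃ (n T : ℕ) (γ : Type) (I : Inst n T γ),
      ∀ d : Fin T → γ, I.ValidSeq d → ¬ I.alphaEllAgreementPJR a d := by
  -- choose k with k ≥ 1 and a * k ≥ 2
  obtain ⟨k, hk1, hka⟩ : ∃ k : ℕ, 1 ≤ k ∧ (2 : ℝ) ≤ a * k := by
    refine ⟨⌈(2 : ℝ) / a⌉₊, ?_, ?_⟩
    · exact Nat.one_le_iff_ne_zero.mpr (by
        have : (0 : ℝ) < 2 / a := by positivity
        exact Nat.pos_iff_ne_zero.mp (Nat.ceil_pos.mpr this))
    · have h1 : (2 : ℝ) / a ≤ (⌈(2 : ℝ) / a⌉₊ : ℝ) := Nat.le_ceil _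
      have := mul_le_mul_of_nonneg_left h1 ha₀.le
      calc (2 : ℝ) = a * (2 / a) := by field_simp
        _ ≤ a * (⌈(2 : ℝ) / a⌉₊ : ℝ) := this
  have hk0 : 0 < k := hk1
  haveI : NeZero k := ⟨by omega⟩
  have hkk : 1 ≤ k * k := Nat.one_le_iff_ne_zero.mpr (by positivity)
  refine ⟨k, k * k, Fin k,
    { hn := hk1
      hT := hkk
      C := fun _ => Finset.univ
      hC := fun _ => ⟨⟨0, hk0⟩, Finset.mem_univ _⟩
      A := fun i j => if (j : ℕ) < k then {i} else ∅
      hA := fun i j => Finset.subset_univ _ }, ?_⟩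
  intro d _ h
  set I : Inst k (k * k) (Fin k) :=
    { hn := hk1
      hT := hkk
      C := fun _ => Finset.univ
      hC := fun _ => ⟨⟨0, hk0⟩, Finset.mem_univ _⟩
      A := fun i j => if (j : ℕ) < k then {i} else ∅
      hA := fun i j => Finset.subset_univ _ } with hI
  -- every singleton group gets at least 2 happy rounds
  have hhc : ∀ i : Fin k, 2 ≤ I.happyCount d {i} := by
    intro i
    have h2 : (2 : ℕ) ≤ ⌊a * (k : ℕ)⌋₊ := Nat.le_floor (by exact_mod_cast hka)
    refine h2.trans (h k hk1 {i} ⟨i, Finset.mem_singleton_self i⟩ ?_ ?_)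
    · -- agree count ≥ k
      have : Nat.card (Fin k) ≤ Nat.card {j : Fin (k * k) // I.agrees {i} j} := by
        refine Nat.card_le_card_of_injective
          (fun m => ⟨⟨(m : ℕ), lt_of_lt_of_le m.2 (Nat.le_mul_of_pos_left k hk0)⟩,
            ⟨i, fun i' hi' => by
              simp only [Finset.mem_singleton] at hi'
              subst hi'
              simp [hI, m.2]⟩⟩) ?_
        intro m₁ m₂ hm
        exact Fin.ext (congrArg (fun x => x.1.val) hm)
      simpa [Inst.agreeCount] using this
    · -- size condition : k * k / (k*k) ≤ 1
      have hkR : (k : ℝ) ≠ 0 := by exact_mod_cast hk0.ne'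
      simp only [Finset.card_singleton, Nat.cast_one, Nat.cast_mul]
      rw [div_le_one (by positivity)]
  -- but each of the first k rounds can make at most one voter happy
  have hle : ∀ i : Fin k,
      I.happyCount d {i} ≤ (Finset.univ.filter
        (fun j : Fin (k * k) => (j : ℕ) < k ∧ d j = i)).card := by
    intro i
    have : I.happyCount d {i}
        = (Finset.univ.filter (fun j : Fin (k * k) => ∃ i' ∈ ({i} : Finset (Fin k)),
            d j ∈ I.A i' j)).card := by
      rw [Inst.happyCount, Nat.card_eq_fintype_card, Fintype.card_subtype]
    rw [this]
    apply Finset.card_le_card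
    intro j hj
    simp only [Finset.mem_filter, Finset.mem_univ, true_and, Finset.mem_singleton] at hj ⊢
    obtain ⟨i', hi', hdj⟩ := hj
    subst hi'
    by_cases hjk : (j : ℕ) < k
    · simp only [hI, if_pos hjk, Finset.mem_singleton] at hdj
      exact ⟨hjk, hdj⟩
    · simp [hI, if_neg hjk] at hdj
  have hsum : ∑ i : Fin k, (Finset.univ.filter
      (fun j : Fin (k * k) => (j : ℕ) < k ∧ d j = i)).card ≤ k := by
    have heq : ∀ i : Fin k, (Finset.univ.filter
        (fun j : Fin (k * k) => (j : ℕ) < k ∧ d j = i))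
        = ((Finset.univ.filter (fun j : Fin (k * k) => (j : ℕ) < k)).filter
            (fun j => d j = i)) := by
      intro i; rw [Finset.filter_filter]
    have hfib := Finset.card_eq_sum_card_fiberwise
      (f := d) (s := Finset.univ.filter (fun j : Fin (k * k) => (j : ℕ) < k))
      (t := Finset.univ) (fun x _ => Finset.mem_univ _)
    calc ∑ i : Fin k, (Finset.univ.filter
          (fun j : Fin (k * k) => (j : ℕ) < k ∧ d j = i)).card
        = ∑ i : Fin k, ((Finset.univ.filter (fun j : Fin (k * k) => (j : ℕ) < k)).filter
            (fun j => d j = i)).card := by simp_rw [heq]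
      _ = (Finset.univ.filter (fun j : Fin (k * k) => (j : ℕ) < k)).card := hfib.symm
      _ ≤ k := by
          have : (Finset.univ.filter (fun j : Fin (k * k) => (j : ℕ) < k)).card
              ≤ (Finset.range k).card := by
            refine Finset.card_le_card_of_injOn (fun j => (j : ℕ))
              (fun j hj => ?_) (fun x _ y _ hxy => Fin.ext hxy)
            simp only [Finset.mem_coe, Finset.mem_filter] at hj
            exact Finset.mem_range.mpr hj.2
          simpa using this
  have h2k : 2 * k ≤ ∑ i : Fin k, (Finset.univ.filter
      (fun j : Fin (k * k) => (j : ℕ) < k ∧ d j = i)).card := by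
    calc 2 * k = ∑ _i : Fin k, 2 := by simp [mul_comm]
      _ ≤ _ := Finset.sum_le_sum (fun i _ => (hhc i).trans (hle i))
  omega
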